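/- The central binomial coefficients satisfy binomial(2n, n) = ∫_0^4 x^n · (1/(π√(x(4−x)))) dx for all n ∈ ℕ; in particular, they form a Hausdorff moment sequence on [0,4]. -/

import Mathlib

open MeasureTheory Real

/-- `y` is a `K`-moment sequence. -/
def IsMomentSeqOn (K : Set ℝ) (y : ℕ → ℝ) : Prop :=
  ∃ μ : Measure ℝ, μ Kᶜ = 0 ∧
    ∀ n : ℕ, Integrable (fun x : ℝ => x ^ n) μ ∧ y n = ∫ x, x ^ n ∂μ

lemma prodl (n : ℕ) : (4:ℝ)^n * ∏ i ∈ Finset.range n, (2*(i:ℝ)+1)/(2*i+2) = Nat.centralBinom n := by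
  induction n with
  | zero => simp [Nat.centralBinom]
  | succ n ih =>
    have hc : ((n:ℝ)+1) * Nat.centralBinom (n+1) = 2*(2*n+1) * Nat.centralBinom n := by
      exact_mod_cast Nat.succ_mul_centralBinom_succ n
    have h1 : (2*(n:ℝ)+2) ≠ 0 := by positivity
    calc (4:ℝ)^(n+1) * ∏ i ∈ Finset.range (n+1), (2*(i:ℝ)+1)/(2*i+2)
        = ((4:ℝ)^n * ∏ i ∈ Finset.range n, (2*(i:ℝ)+1)/(2*i+2)) * (4 * ((2*n+1)/(2*n+2))) := by
          rw [Finset.prod_range_succ, pow_succ]; ring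
      _ = (Nat.centralBinom n : ℝ) * (4 * ((2*n+1)/(2*n+2))) := by rw [ih]
      _ = Nat.centralBinom (n+1) := by
          field_simp
          linear_combination (-2 : ℝ) * hc

lemma halfint (m : ℕ) : ∫ x in (0:ℝ)..(π/2), sin x ^ m = (∫ x in (0:ℝ)..π, sin x ^ m) / 2 := by
  have hi : ∀ a b : ℝ, IntervalIntegrable (fun x => sin x ^ m) volume a b :=
    fun a b => (continuous_sin.pow m).intervalIntegrable a b
  have hsplit := intervalIntegral.integral_add_adjacent_intervals (hi 0 (π/2)) (hi (π/2) π)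
  have hsym : (∫ x in (π/2)..π, sin x ^ m) = ∫ x in (0:ℝ)..(π/2), sin x ^ m := by
    have h := intervalIntegral.integral_comp_sub_left (fun x => sin x ^ m) π (a := π/2) (b := π)
    have heq : (∫ x in (π/2)..π, sin (π - x) ^ m) = ∫ x in (π/2)..π, sin x ^ m := by
      simp [Real.sin_pi_sub]
    rw [heq, sub_self, show π - π/2 = π/2 by ring] at h
    exact h
  linarith

lemma cosint (n : ℕ) : (∫ θ in (0:ℝ)..π, (2 - 2*Real.cos θ)^n) = π * Nat.centralBinom n := by
  have h1 : ∀ θ : ℝ, 2 - 2*Real.cos θ = 4 * Real.sin (θ/2)^2 := by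
    intro θ
    have h := Real.cos_two_mul' (θ/2)
    have h2 : 2 * (θ/2) = θ := by ring
    rw [h2] at h
    have h3 := Real.sin_sq_add_cos_sq (θ/2)
    nlinarith
  simp_rw [h1]
  rw [intervalIntegral.integral_comp_div (fun u => (4*Real.sin u ^2)^n) two_ne_zero]
  have hpow : ∀ u : ℝ, (4*Real.sin u^2)^n = 4^n * Real.sin u ^ (2*n) := by
    intro u; rw [mul_pow, ← pow_mul, mul_comm 2 n]
  simp_rw [hpow]
  rw [zero_div, intervalIntegral.integral_const_mul, halfint, integral_sin_pow_even, smul_eq_mul]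
  linear_combination π * prodl n

noncomputable def gg (n : ℕ) (x : ℝ) : ℝ := x ^ n * (1 / (π * Real.sqrt (x * (4 - x))))

lemma fmono : StrictMonoOn (fun θ : ℝ => 2 - 2*Real.cos θ) (Set.Icc 0 π) := by
  intro a ha b hb hab
  have := Real.strictAntiOn_cos ha hb hab
  simp only
  linarith

lemma fimage : (fun θ : ℝ => 2 - 2*Real.cos θ) '' Set.Ioo 0 π = Set.Ioo 0 4 := by
  apply Set.Subset.antisymm
  · rintro x ⟨θ, hθ, rfl⟩
    have h1 := fmono (Set.left_mem_Icc.2 Real.pi_pos.le) (Set.Ioo_subset_Icc_self hθ) hθ.1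
    have h2 := fmono (Set.Ioo_subset_Icc_self hθ) (Set.right_mem_Icc.2 Real.pi_pos.le) hθ.2
    simp only [Real.cos_zero, Real.cos_pi] at h1 h2
    simp only at h1 h2 ⊢
    exact ⟨by linarith, by linarith⟩
  · have h := intermediate_value_Ioo (a := (0:ℝ)) (b := π) Real.pi_pos.le
      (Continuous.continuousOn (by continuity) (s := Set.Icc 0 π)
        (f := fun θ : ℝ => 2 - 2*Real.cos θ))
    simp only [Real.cos_zero, Real.cos_pi] at h
    norm_num at h
    exact h

lemma finj : Set.InjOn (fun θ : ℝ => 2 - 2*Real.cos θ) (Set.Ioo 0 π) :=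
  (fmono.injOn).mono Set.Ioo_subset_Icc_self

lemma fderiv' : ∀ θ ∈ Set.Ioo (0:ℝ) π,
    HasDerivWithinAt (fun θ : ℝ => 2 - 2*Real.cos θ) (2 * Real.sin θ) (Set.Ioo 0 π) θ := by
  intro θ _
  have : HasDerivAt (fun θ : ℝ => 2 - 2*Real.cos θ) (2 * Real.sin θ) θ := by
    have h := ((Real.hasDerivAt_cos θ).const_mul 2).const_sub 2
    simpa using h
  exact this.hasDerivWithinAt

lemma feq (n : ℕ) : ∀ θ ∈ Set.Ioo (0:ℝ) π,
    |2 * Real.sin θ| • gg n (2 - 2*Real.cos θ) = (2 - 2*Real.cos θ)^n * π⁻¹ := by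
  intro θ hθ
  have hs : 0 < Real.sin θ := Real.sin_pos_of_pos_of_lt_pi hθ.1 hθ.2
  have hsq : (2 - 2*Real.cos θ) * (4 - (2 - 2*Real.cos θ)) = (2 * Real.sin θ)^2 := by
    have := Real.sin_sq_add_cos_sq θ
    nlinarith
  have hsqrt : Real.sqrt ((2 - 2*Real.cos θ) * (4 - (2 - 2*Real.cos θ))) = 2 * Real.sin θ := by
    rw [hsq, Real.sqrt_sq (by linarith)]
  simp only [gg, smul_eq_mul, hsqrt, abs_of_pos (by linarith : (0:ℝ) < 2 * Real.sin θ)]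
  have hπ : (π : ℝ) ≠ 0 := Real.pi_ne_zero
  field_simp

lemma keyint (n : ℕ) :
    (∫ x in (0:ℝ)..4, x ^ n * (1 / (π * Real.sqrt (x * (4 - x))))) = Nat.centralBinom n ∧
    IntegrableOn (gg n) (Set.Ioo 0 4) volume := by
  have hmeasIoo : MeasurableSet (Set.Ioo (0:ℝ) π) := measurableSet_Ioo
  have himg := MeasureTheory.integral_image_eq_integral_abs_deriv_smul hmeasIoo fderiv' finj (gg n)
  rw [fimage] at himg
  have hcongr : ∫ θ in Set.Ioo (0:ℝ) π, |2 * Real.sin θ| • gg n (2 - 2*Real.cos θ)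
      = ∫ θ in Set.Ioo (0:ℝ) π, (2 - 2*Real.cos θ)^n * π⁻¹ :=
    setIntegral_congr_fun hmeasIoo (feq n)
  have hcont : Continuous fun θ : ℝ => (2 - 2*Real.cos θ)^n * π⁻¹ := by continuity
  have hval : ∫ θ in Set.Ioo (0:ℝ) π, (2 - 2*Real.cos θ)^n * π⁻¹ = Nat.centralBinom n := by
    rw [← MeasureTheory.integral_Ioc_eq_integral_Ioo,
      ← intervalIntegral.integral_of_le Real.pi_pos.le,
      intervalIntegral.integral_mul_const, cosint]
    field_simp
  constructor
  · rw [intervalIntegral.integral_of_le (by norm_num : (0:ℝ) ≤ 4),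
      MeasureTheory.integral_Ioc_eq_integral_Ioo]
    show (∫ x in Set.Ioo (0:ℝ) 4, gg n x) = _
    rw [himg, hcongr, hval]
  · rw [← fimage,
      MeasureTheory.integrableOn_image_iff_integrableOn_abs_deriv_smul hmeasIoo fderiv' finj]
    apply MeasureTheory.IntegrableOn.congr_fun _ (fun θ hθ => (feq n θ hθ).symm) hmeasIoo
    exact (hcont.integrableOn_Icc).mono_set Set.Ioo_subset_Icc_self

lemma inter_empty' : (Set.Icc (0:ℝ) 4)ᶜ ∩ Set.Ioo 0 4 = ∅ := by
  rw [Set.eq_empty_iff_forall_notMem]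
  rintro x ⟨hc, hio⟩
  exact hc (Set.Ioo_subset_Icc_self hio)

/-- the central binomial coefficients satisfy
`binom(2n,n) = ∫₀⁴ xⁿ / (π·√(x(4−x))) dx`, and in particular they form a
Hausdorff moment sequence on `[0,4]`. -/
theorem centralBinom_integral_repr :
    (∀ n : ℕ, (Nat.centralBinom n : ℝ) =
      ∫ x in (0:ℝ)..4, x ^ n * (1 / (π * Real.sqrt (x * (4 - x))))) ∧
    IsMomentSeqOn (Set.Icc 0 4) (fun n => (Nat.centralBinom n : ℝ)) := by
  refine ⟨fun n => (keyint n).1.symm, ?_⟩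
  set d : ℝ → ℝ := fun x => 1 / (π * Real.sqrt (x * (4 - x))) with hd
  have hd0 : ∀ x, 0 ≤ d x := fun x => by positivity
  have hdm : Measurable d := by
    have hc : Continuous fun x : ℝ => π * Real.sqrt (x * (4 - x)) := by
      exact continuous_const.mul (Real.continuous_sqrt.comp (by continuity))
    exact measurable_const.div hc.measurable
  refine ⟨(volume.restrict (Set.Ioo 0 4)).withDensity fun x => ENNReal.ofReal (d x), ?_, fun n => ?_⟩
  · rw [withDensity_apply _ measurableSet_Icc.compl,
      Measure.restrict_restrict measurableSet_Icc.compl, inter_empty', Measure.restrict_empty,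
      lintegral_zero_measure]
  · have hIoo : ∫ x in Set.Ioo (0:ℝ) 4, gg n x = Nat.centralBinom n := by
      have := (keyint n).1
      rwa [intervalIntegral.integral_of_le (by norm_num : (0:ℝ) ≤ 4),
        MeasureTheory.integral_Ioc_eq_integral_Ioo] at this
    have hmeas : Measurable fun x => ENNReal.ofReal (d x) := hdm.ennreal_ofReal
    constructor
    · rw [MeasureTheory.integrable_withDensity_iff hmeas
        (ae_of_all _ fun x => ENNReal.ofReal_lt_top)]
      apply ((keyint n).2).congr
      filter_upwards with x
      rw [ENNReal.toReal_ofReal (hd0 x)]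
      rfl
    · have hrw : (fun x => ENNReal.ofReal (d x)) = fun x => ((fun x => (d x).toNNReal) x : ENNReal) := rfl
      rw [hrw, integral_withDensity_eq_integral_smul hdm.real_toNNReal]
      simp only
      rw [show (∫ x in Set.Ioo (0:ℝ) 4, (d x).toNNReal • x ^ n) = ∫ x in Set.Ioo (0:ℝ) 4, gg n x from
        setIntegral_congr_fun measurableSet_Ioo (fun x _ => by
          rw [NNReal.smul_def, Real.coe_toNNReal _ (hd0 x), smul_eq_mul, mul_comm (d x) (x^n)]
          rfl), hIoo]
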